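/- The operators d^r are uniquely determined by the two properties: (i) f = Σ_{r=1}^n d^r(f)·x_r for all f in the maximal ideal, and (ii) d^r(f) ∈ K[[x_r,...,x_n]]. That is, if (g_1,...,g_n) satisfies f = Σ g_r x_r with g_r ∈ K[[x_r,...,x_n]] for all r, then g_r = d^r(f) for all r. -/

import Mathlib

open Classical in
/-- The operator `d^r` on `K[[x_1,…,x_n]]`. -/
noncomputable def dOp {K : Type*} [Field K] {n : ℕ} (r : Fin n)
    (f : MvPowerSeries (Fin n) K) : MvPowerSeries (Fin n) K :=
  fun m => if (∀ i : Fin n, i < r → m i = 0)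
    then MvPowerSeries.coeff (m + Finsupp.single r 1) f else 0

/-- The operators `d^r` are uniquely determined by the properties
(i) `f = Σ_r d^r(f)·x_r` and (ii) `d^r(f) ∈ K[[x_r,…,x_n]]`: if `(g_1,…,g_n)` satisfies
`f = Σ_r g_r·x_r` with each `g_r` involving only the variables `x_r,…,x_n`,
then `g_r = d^r(f)` for all `r`. -/
theorem dOp_unique {K : Type*} [Field K] {n : ℕ}
    (f : MvPowerSeries (Fin n) K)
    (hf : MvPowerSeries.constantCoeff f = 0)
    (g : Fin n → MvPowerSeries (Fin n) K)
    (hsum : f = ∑ r : Fin n, g r * MvPowerSeries.X r)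
    (hsupp : ∀ r : Fin n, ∀ m : Fin n →₀ ℕ, ∀ i : Fin n, i < r → m i ≠ 0 →
      MvPowerSeries.coeff m (g r) = 0) :
    ∀ r : Fin n, g r = dOp r f := by
  classical
  intro r
  ext m
  show MvPowerSeries.coeff m (g r) = dOp r f m
  unfold dOp
  by_cases h : ∀ i : Fin n, i < r → m i = 0
  · rw [if_pos h, hsum, map_sum, Finset.sum_eq_single r]
    · rw [MvPowerSeries.X_def, MvPowerSeries.coeff_add_mul_monomial, mul_one]
    · intro s _ hs
      rw [MvPowerSeries.X_def, MvPowerSeries.coeff_mul_monomial]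
      split_ifs with hle
      · rcases lt_or_gt_of_ne hs with hlt | hgt
        · exfalso
          have h1 := Finsupp.le_def.mp hle s
          simp [Finsupp.single_apply, hs, Ne.symm hs, h s hlt] at h1
        · have : MvPowerSeries.coeff (m + Finsupp.single r 1 - Finsupp.single s 1) (g s) = 0 := by
            apply hsupp s _ r hgt
            simp [Finsupp.tsub_apply, Finsupp.single_apply, hs]
          rw [this, zero_mul]
      · rfl
    · simp
  · rw [if_neg h]
    push_neg at h
    obtain ⟨i, hi, hmi⟩ := h
    exact hsupp r m i hi hmi
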